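/- Let j₁, j₂ : [0,T] → ℝ be solutions of j''ᵢ(t) = κᵢ(t)·jᵢ(t) with jᵢ(0) = 0, jᵢ'(0) = 1, where κ₁, κ₂ are continuous, and suppose j₁, j₂ > 0 on (0,T]. Let j_av solve j_av'' = ((κ₁+κ₂)/2)·j_av with the same initial conditions and j_av > 0 on (0,T]. Then for all t ∈ (0,T]: 2·j_av'(t)/j_av(t) ≥ j₁'(t)/j₁(t) + j₂'(t)/j₂(t). -/

import Mathlib

open Filter Set Topology

theorem multiplicative_lemma_log_deriv (T : ℝ) (hT : 0 < T)
    (κ₁ κ₂ : ℝ → ℝ) (hκ₁ : Continuous κ₁) (hκ₂ : Continuous κ₂)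
    (j₁ j₂ jav d₁ d₂ dav : ℝ → ℝ)
    (hj₁ : ∀ t, HasDerivAt j₁ (d₁ t) t) (hd₁ : ∀ t, HasDerivAt d₁ (κ₁ t * j₁ t) t)
    (hj₂ : ∀ t, HasDerivAt j₂ (d₂ t) t) (hd₂ : ∀ t, HasDerivAt d₂ (κ₂ t * j₂ t) t)
    (hjav : ∀ t, HasDerivAt jav (dav t) t)
    (hdav : ∀ t, HasDerivAt dav ((κ₁ t + κ₂ t) / 2 * jav t) t)
    (h₁0 : j₁ 0 = 0) (h₂0 : j₂ 0 = 0) (hav0 : jav 0 = 0)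
    (h₁0' : d₁ 0 = 1) (h₂0' : d₂ 0 = 1) (hav0' : dav 0 = 1)
    (hpos₁ : ∀ t ∈ Set.Ioc (0 : ℝ) T, 0 < j₁ t)
    (hpos₂ : ∀ t ∈ Set.Ioc (0 : ℝ) T, 0 < j₂ t)
    (hposav : ∀ t ∈ Set.Ioc (0 : ℝ) T, 0 < jav t) :
    ∀ t ∈ Set.Ioc (0 : ℝ) T, 2 * dav t / jav t ≥ d₁ t / j₁ t + d₂ t / j₂ t := by
  set G : ℝ → ℝ := fun s => 2 * dav s * jav s - (d₁ s / j₁ s + d₂ s / j₂ s) * (jav s) ^ 2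
    with hGdef
  -- derivative of G where j₁, j₂ don't vanish
  have hGderiv : ∀ s, j₁ s ≠ 0 → j₂ s ≠ 0 →
      HasDerivAt G ((d₁ s * jav s / j₁ s - dav s) ^ 2 + (d₂ s * jav s / j₂ s - dav s) ^ 2) s := by
    intro s h1 h2
    have H := (((hdav s).const_mul 2).mul (hjav s)).sub
      ((((hd₁ s).div (hj₁ s) h1).add ((hd₂ s).div (hj₂ s) h2)).mul ((hjav s).pow 2))
    convert H using 1
    · rfl
    · rfl
    · rfl
    · simp only [Pi.pow_apply, Pi.add_apply, Pi.div_apply]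
      field_simp
      ring
  -- slope limits at 0
  have slope_lim : ∀ (f : ℝ → ℝ) (f' : ℝ → ℝ), (∀ u, HasDerivAt f (f' u) u) → f 0 = 0 →
      Tendsto (fun a => f a / a) (𝓝[>] (0:ℝ)) (𝓝 (f' 0)) := by
    intro f f' hf hf0
    have h := hasDerivAt_iff_tendsto_slope.mp (hf 0)
    have h2 := h.mono_left (nhdsWithin_mono _ (fun x hx => ne_of_gt hx : Set.Ioi (0:ℝ) ⊆ {(0:ℝ)}ᶜ))
    refine h2.congr fun a => ?_
    simp [slope_def_field, hf0]
  have sav : Tendsto (fun a => jav a / a) (𝓝[>] (0:ℝ)) (𝓝 1) := by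
    simpa [hav0'] using slope_lim jav dav hjav hav0
  have s1 : Tendsto (fun a => j₁ a / a) (𝓝[>] (0:ℝ)) (𝓝 1) := by
    simpa [h₁0'] using slope_lim j₁ d₁ hj₁ h₁0
  have s2 : Tendsto (fun a => j₂ a / a) (𝓝[>] (0:ℝ)) (𝓝 1) := by
    simpa [h₂0'] using slope_lim j₂ d₂ hj₂ h₂0
  have cd₁ : Tendsto d₁ (𝓝[>] (0:ℝ)) (𝓝 1) := by
    simpa [h₁0'] using ((hd₁ 0).continuousAt.tendsto).mono_left nhdsWithin_le_nhds
  have cd₂ : Tendsto d₂ (𝓝[>] (0:ℝ)) (𝓝 1) := by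
    simpa [h₂0'] using ((hd₂ 0).continuousAt.tendsto).mono_left nhdsWithin_le_nhds
  have cdav : Tendsto dav (𝓝[>] (0:ℝ)) (𝓝 1) := by
    simpa [hav0'] using ((hdav 0).continuousAt.tendsto).mono_left nhdsWithin_le_nhds
  have cjav : Tendsto jav (𝓝[>] (0:ℝ)) (𝓝 0) := by
    simpa [hav0] using ((hjav 0).continuousAt.tendsto).mono_left nhdsWithin_le_nhds
  have cId : Tendsto (fun a : ℝ => a) (𝓝[>] (0:ℝ)) (𝓝 0) :=
    tendsto_id.mono_left nhdsWithin_le_nhds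
  -- G tends to 0 at 0⁺
  have hlim : Tendsto G (𝓝[>] (0:ℝ)) (𝓝 0) := by
    have haux : Tendsto (fun a => 2 * dav a * jav a
        - (d₁ a * (jav a / a) ^ 2 / (j₁ a / a) + d₂ a * (jav a / a) ^ 2 / (j₂ a / a)) * a)
        (𝓝[>] (0:ℝ)) (𝓝 (2 * 1 * 0 - (1 * 1 ^ 2 / 1 + 1 * 1 ^ 2 / 1) * 0)) := by
      refine Tendsto.sub (((cdav.const_mul 2).mul cjav)) ?_
      refine Tendsto.mul (Tendsto.add ?_ ?_) cId
      · exact (cd₁.mul (sav.pow 2)).div s1 one_ne_zero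
      · exact (cd₂.mul (sav.pow 2)).div s2 one_ne_zero
    norm_num at haux
    refine haux.congr' ?_
    filter_upwards [Ioc_mem_nhdsGT_of_mem (⟨le_rfl, hT⟩ : (0:ℝ) ∈ Set.Ico 0 T)] with a ha
    have ha0 : a ≠ 0 := ne_of_gt ha.1
    have hj1 : j₁ a ≠ 0 := (hpos₁ a ha).ne'
    have hj2 : j₂ a ≠ 0 := (hpos₂ a ha).ne'
    simp only [hGdef]
    field_simp
  intro t ht
  obtain ⟨ht0, htT⟩ := ht
  have hjavt := hposav t ⟨ht0, htT⟩
  -- monotonicity: G a ≤ G t for a ∈ (0, t]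
  have mono : ∀ a ∈ Set.Ioc (0:ℝ) t, G a ≤ G t := by
    rintro a ⟨ha0, hat⟩
    have hmono : MonotoneOn G (Set.Icc a t) := by
      refine monotoneOn_of_deriv_nonneg (convex_Icc a t) ?_ ?_ ?_
      · intro s hs
        have hs' : s ∈ Set.Ioc (0:ℝ) T := ⟨lt_of_lt_of_le ha0 hs.1, le_trans hs.2 htT⟩
        exact (hGderiv s (hpos₁ s hs').ne' (hpos₂ s hs').ne').continuousAt.continuousWithinAt
      · intro s hs
        rw [interior_Icc] at hs
        have hs' : s ∈ Set.Ioc (0:ℝ) T := ⟨ha0.trans hs.1, hs.2.le.trans htT⟩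
        exact ((hGderiv s (hpos₁ s hs').ne' (hpos₂ s hs').ne').differentiableAt).differentiableWithinAt
      · intro s hs
        rw [interior_Icc] at hs
        have hs' : s ∈ Set.Ioc (0:ℝ) T := ⟨ha0.trans hs.1, hs.2.le.trans htT⟩
        rw [(hGderiv s (hpos₁ s hs').ne' (hpos₂ s hs').ne').deriv]
        positivity
    exact hmono ⟨le_rfl, hat⟩ ⟨hat, le_rfl⟩ hat
  have key : (0:ℝ) ≤ G t := by
    refine le_of_tendsto hlim ?_
    filter_upwards [Ioc_mem_nhdsGT_of_mem (⟨le_rfl, ht0⟩ : (0:ℝ) ∈ Set.Ico 0 t)] with a ha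
    exact mono a ha
  simp only [hGdef, sub_nonneg] at key
  rw [ge_iff_le, le_div_iff₀ hjavt, ← mul_le_mul_iff_of_pos_right hjavt]
  nlinarith [key]
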